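/- On the symmetric algebra of the Lie algebra of a Lie group G, the standard-ordered star product of an invariant polynomial with a function satisfies the key mixed-product formula: (1 ⊗ ξ₁∨⋯∨ξ_k) ⋆_std (φ ⊗ 1) = Σ_{p=0}^{k} (ħ/i)^p (1/(p!(k−p)!)) Σ_{σ∈S_k} (L_{X_{ξ_{σ(1)}}}⋯L_{X_{ξ_{σ(p)}}}φ) ⊗ ξ_{σ(p+1)}∨⋯∨ξ_{σ(k)}; in particular, applying the operator Δ^ℓ defined by Δ(φ⊗ξ₁∨⋯∨ξ_k) = Σ_j (L_{X_{ξ_j}}φ)⊗ξ₁∨⋯ĵ⋯∨ξ_k gives Δ^ℓ(φ⊗ξ₁∨⋯∨ξ_k) = (1/(k−ℓ)!) Σ_{σ∈S_k} L_{X_{ξ_{σ(1)}}}⋯L_{X_{ξ_{σ(ℓ)}}}φ ⊗ ξ_{σ(ℓ+1)}∨⋯∨ξ_{σ(k)} for ℓ ≤ k, and zero for ℓ > k. -/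

import Mathlib

open scoped TensorProduct

/-- The operator `Δ` on `A ⊗ Sym(𝔤_ℂ)` (with `Sym(𝔤_ℂ)` realized as polynomials in the
basis variables): `Δ(φ ⊗ P) = Σᵢ (Lᵢ φ) ⊗ ∂ᵢP`, so that on generators
`Δ(φ ⊗ ξ₁∨⋯∨ξ_k) = Σⱼ (L_{X_{ξⱼ}}φ) ⊗ ξ₁∨⋯ĵ⋯∨ξ_k`. -/
noncomputable def Delta {A : Type*} [AddCommGroup A] [Module ℂ A] {n : ℕ}
    (L : Fin n → Module.End ℂ A) :
    Module.End ℂ (TensorProduct ℂ A (MvPolynomial (Fin n) ℂ)) :=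
  ∑ i, TensorProduct.map (L i) (MvPolynomial.pderiv i).toLinearMap

/-- The linear polynomial representing the Lie algebra element with coordinates `v`. -/
noncomputable def linPoly {n : ℕ} (v : Fin n → ℂ) : MvPolynomial (Fin n) ℂ :=
  ∑ i, MvPolynomial.C (v i) * MvPolynomial.X i

/-- The Lie derivative `L_{X_ξ} = Σᵢ ξⁱ Lᵢ` for `ξ` with coordinates `v`. -/
noncomputable def lieDer {A : Type*} [AddCommGroup A] [Module ℂ A] {n : ℕ}
    (L : Fin n → Module.End ℂ A) (v : Fin n → ℂ) : Module.End ℂ A :=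
  ∑ i, v i • L i

lemma pderiv_linPoly {n : ℕ} (i : Fin n) (v : Fin n → ℂ) :
    MvPolynomial.pderiv i (linPoly v) = MvPolynomial.C (v i) := by
  simp [linPoly, MvPolynomial.pderiv_X, Pi.single_apply, Finset.sum_ite_eq',
    MvPolynomial.pderiv_C_mul]

lemma pderiv_finset_prod {n : ℕ} {α : Type*} [DecidableEq α] (i : Fin n) (S : Finset α)
    (f : α → MvPolynomial (Fin n) ℂ) :
    MvPolynomial.pderiv i (∏ s ∈ S, f s) =
      ∑ s ∈ S, MvPolynomial.pderiv i (f s) * ∏ s' ∈ S.erase s, f s' := by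
  induction S using Finset.induction with
  | empty => simp
  | insert a S hx ih =>
    rw [Finset.prod_insert hx, MvPolynomial.pderiv_mul, ih, Finset.sum_insert hx,
      Finset.erase_insert hx]
    rw [Finset.mul_sum]
    congr 1
    refine Finset.sum_congr rfl fun b hb => ?_
    rw [Finset.erase_insert_of_ne (by rintro rfl; exact hx hb)]
    rw [Finset.prod_insert (fun h => hx (Finset.erase_subset _ _ h))]
    ring

lemma delta_step {A : Type*} [AddCommGroup A] [Module ℂ A] {n : ℕ}
    (L : Fin n → Module.End ℂ A) (ψ : A) {α : Type*} [DecidableEq α] (S : Finset α)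
    (v : α → Fin n → ℂ) :
    Delta L (ψ ⊗ₜ[ℂ] ∏ s ∈ S, linPoly (v s)) =
      ∑ s ∈ S, (lieDer L (v s)) ψ ⊗ₜ[ℂ] ∏ s' ∈ S.erase s, linPoly (v s') := by
  rw [Delta, LinearMap.sum_apply]
  have h1 : ∀ i : Fin n,
      (TensorProduct.map (L i) (MvPolynomial.pderiv i).toLinearMap)
        (ψ ⊗ₜ[ℂ] ∏ s ∈ S, linPoly (v s)) =
      ∑ s ∈ S, (v s i • L i ψ) ⊗ₜ[ℂ] ∏ s' ∈ S.erase s, linPoly (v s') := by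
    intro i
    rw [TensorProduct.map_tmul]
    show (L i) ψ ⊗ₜ[ℂ] (MvPolynomial.pderiv i) (∏ s ∈ S, linPoly (v s)) = _
    rw [pderiv_finset_prod, TensorProduct.tmul_sum]
    refine Finset.sum_congr rfl fun s _ => ?_
    rw [pderiv_linPoly, ← MvPolynomial.smul_eq_C_mul, TensorProduct.tmul_smul,
      ← TensorProduct.smul_tmul']
  rw [Finset.sum_congr rfl fun i _ => h1 i, Finset.sum_comm]
  refine Finset.sum_congr rfl fun s _ => ?_
  rw [lieDer, ← TensorProduct.sum_tmul, LinearMap.sum_apply]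
  congr 1

lemma delta_tmul_one {A : Type*} [AddCommGroup A] [Module ℂ A] {n : ℕ}
    (L : Fin n → Module.End ℂ A) (ψ : A) :
    Delta L (ψ ⊗ₜ[ℂ] (1 : MvPolynomial (Fin n) ℂ)) = 0 := by
  rw [Delta, LinearMap.sum_apply]
  refine Finset.sum_eq_zero fun i _ => ?_
  rw [TensorProduct.map_tmul]
  show (L i) ψ ⊗ₜ[ℂ] (MvPolynomial.pderiv i) (1 : MvPolynomial (Fin n) ℂ) = 0
  rw [MvPolynomial.pderiv_one, TensorProduct.tmul_zero]

section CombPerm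
variable {m : ℕ}

lemma listmap_c (ℓ : ℕ) (hℓ : ℓ < m + 1) (t : Fin (m+1)) (ht : ℓ ≤ (t:ℕ)) :
    ((List.finRange (m+1)).take (ℓ+1)).map
        (Equiv.swap (⟨ℓ, hℓ⟩ : Fin (m+1)) t * (Fin.cycleRange ⟨ℓ, hℓ⟩)⁻¹)
      = t :: (List.finRange (m+1)).take ℓ := by
  set i0 : Fin (m+1) := ⟨ℓ, hℓ⟩ with hi0
  set c := Equiv.swap i0 t * (Fin.cycleRange i0)⁻¹ with hc
  apply List.ext_getElem
  · simp [List.length_take]; omega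
  · intro i h1 h2
    simp only [List.length_map, List.length_take, List.length_finRange] at h1
    simp only [List.getElem_map, List.getElem_take, List.getElem_finRange]
    match i with
    | 0 =>
      have h0 : (Fin.cycleRange i0)⁻¹ (0 : Fin (m+1)) = i0 := by
        rw [← Fin.cycleRange_self i0, Equiv.Perm.inv_def, Equiv.symm_apply_apply]
      simp only [List.getElem_cons_zero]
      show c ⟨0, _⟩ = t
      have : (⟨0, by omega⟩ : Fin (m+1)) = 0 := rfl
      rw [this, hc, Equiv.Perm.mul_apply, h0, Equiv.swap_apply_left]
    | (j+1) =>
      have hj : j < ℓ := by omega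
      simp only [List.getElem_cons_succ, List.getElem_take, List.getElem_finRange]
      show c ⟨j+1, _⟩ = ⟨j, by omega⟩
      have hcy : Fin.cycleRange i0 ⟨j, by omega⟩ = ⟨j+1, by omega⟩ := by
        apply Fin.ext
        rw [Fin.coe_cycleRange_of_lt]
        exact hj
      have hinv : (Fin.cycleRange i0)⁻¹ ⟨j+1, by omega⟩ = ⟨j, by omega⟩ := by
        rw [← hcy, Equiv.Perm.inv_def, Equiv.symm_apply_apply]
      simp only [hc, Equiv.Perm.mul_apply]
      rw [hinv, Equiv.swap_apply_of_ne_of_ne]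
      · exact Fin.ne_of_val_ne (by simp only [Fin.val_mk, hi0]; omega)
      · exact Fin.ne_of_val_ne (by simp only [Fin.val_mk]; omega)

lemma c_apply_of_gt (ℓ : ℕ) (hℓ : ℓ < m + 1) (t : Fin (m+1)) (ht : ℓ ≤ (t:ℕ))
    (s : Fin (m+1)) (hs : ℓ + 1 ≤ (s:ℕ)) :
    (Equiv.swap (⟨ℓ, hℓ⟩ : Fin (m+1)) t * (Fin.cycleRange ⟨ℓ, hℓ⟩)⁻¹) s
      = Equiv.swap (⟨ℓ, hℓ⟩ : Fin (m+1)) t s := by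
  set i0 : Fin (m+1) := ⟨ℓ, hℓ⟩ with hi0
  have hfix : Fin.cycleRange i0 s = s := Fin.cycleRange_of_gt (by
    rw [Fin.lt_def]; exact (by omega : ℓ < (s:ℕ)))
  have : (Fin.cycleRange i0)⁻¹ s = s := by
    nth_rewrite 1 [← hfix]; rw [Equiv.Perm.inv_def, Equiv.symm_apply_apply]
  rw [Equiv.Perm.mul_apply, this]

lemma c_mem_erase (ℓ : ℕ) (hℓ : ℓ < m + 1) (t : Fin (m+1)) (ht : ℓ ≤ (t:ℕ))
    (s : Fin (m+1)) (hs : ℓ + 1 ≤ (s:ℕ)) :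
    ((Equiv.swap (⟨ℓ, hℓ⟩ : Fin (m+1)) t * (Fin.cycleRange ⟨ℓ, hℓ⟩)⁻¹) s) ≠ t ∧
    ℓ ≤ (((Equiv.swap (⟨ℓ, hℓ⟩ : Fin (m+1)) t * (Fin.cycleRange ⟨ℓ, hℓ⟩)⁻¹) s) : ℕ) := by
  rw [c_apply_of_gt ℓ hℓ t ht s hs]
  by_cases hst : s = t
  · subst hst
    rw [Equiv.swap_apply_right]
    refine ⟨Fin.ne_of_val_ne ?_, by simp⟩
    simp only [Fin.val_mk]; omega
  · rw [Equiv.swap_apply_of_ne_of_ne (Fin.ne_of_val_ne (by simp only [Fin.val_mk]; omega)) hst]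
    exact ⟨hst, by omega⟩

lemma c_inv_mem (ℓ : ℕ) (hℓ : ℓ < m + 1) (t : Fin (m+1)) (ht : ℓ ≤ (t:ℕ))
    (u : Fin (m+1)) (hu : ℓ ≤ (u:ℕ)) (hut : u ≠ t) :
    ℓ + 1 ≤ (((Equiv.swap (⟨ℓ, hℓ⟩ : Fin (m+1)) t * (Fin.cycleRange ⟨ℓ, hℓ⟩)⁻¹)⁻¹ u) : ℕ) := by
  rw [mul_inv_rev, inv_inv, Equiv.Perm.mul_apply, Equiv.swap_inv]
  by_cases hu0 : u = (⟨ℓ, hℓ⟩ : Fin (m+1))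
  · subst hu0
    rw [Equiv.swap_apply_left]
    have hlt : ℓ < (t:ℕ) := by
      rcases Nat.lt_or_ge ℓ (t:ℕ) with h | h
      · exact h
      · exact absurd (Fin.ext
          (by simp only [Fin.val_mk]; omega : ((⟨ℓ, hℓ⟩ : Fin (m+1)):ℕ) = (t:ℕ))) hut
    rw [Fin.cycleRange_of_gt (by rw [Fin.lt_def]; simpa using hlt)]
    omega
  · rw [Equiv.swap_apply_of_ne_of_ne hu0 hut]
    have : ℓ < (u:ℕ) := by
      rcases Nat.lt_or_ge ℓ (u:ℕ) with h | h
      · exact h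
      · exact absurd (Fin.ext (by simp only [Fin.val_mk]; omega)) hu0
    rw [Fin.cycleRange_of_gt (by rw [Fin.lt_def]; simpa using this)]
    omega

end CombPerm

set_option maxHeartbeats 1000000 in
lemma sum_shift {A : Type*} [AddCommGroup A] [Module ℂ A] {n m : ℕ}
    (L : Fin n → Module.End ℂ A) (φ : A) (ξ : Fin (m+1) → Fin n → ℂ)
    (ℓ : ℕ) (hℓ : ℓ < m + 1) :
    (∑ σ : Equiv.Perm (Fin (m+1)),
      ∑ t ∈ Finset.univ.filter (fun t : Fin (m+1) => ℓ ≤ (t:ℕ)),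
        (lieDer L (ξ (σ t)))
            ((((List.finRange (m+1)).take ℓ).map (fun s => lieDer L (ξ (σ s)))).foldr
              (fun E x => E x) φ) ⊗ₜ[ℂ]
          ∏ s ∈ (Finset.univ.filter (fun t : Fin (m+1) => ℓ ≤ (t:ℕ))).erase t,
            linPoly (ξ (σ s)))
  = (m + 1 - ℓ) •
      ∑ σ : Equiv.Perm (Fin (m+1)),
        ((((List.finRange (m+1)).take (ℓ+1)).map (fun s => lieDer L (ξ (σ s)))).foldr
            (fun E x => E x) φ) ⊗ₜ[ℂ]
          ∏ s ∈ Finset.univ.filter (fun s : Fin (m+1) => ℓ + 1 ≤ (s:ℕ)),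
            linPoly (ξ (σ s)) := by
  rw [Finset.sum_comm]
  have hcard : (Finset.univ.filter (fun t : Fin (m+1) => ℓ ≤ (t:ℕ))).card = m + 1 - ℓ := by
    have he : Finset.univ.filter (fun t : Fin (m+1) => ℓ ≤ (t:ℕ))
        = Finset.Ici (⟨ℓ, hℓ⟩ : Fin (m+1)) := by
      ext x
      simp [Fin.le_def]
    rw [he, Fin.card_Ici]
  rw [Finset.sum_congr rfl (fun t ht => ?_), Finset.sum_const, hcard]
  have ht' : ℓ ≤ (t:ℕ) := (Finset.mem_filter.mp ht).2
  set c : Equiv.Perm (Fin (m+1)) :=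
    Equiv.swap (⟨ℓ, hℓ⟩ : Fin (m+1)) t * (Fin.cycleRange ⟨ℓ, hℓ⟩)⁻¹ with hc
  rw [← Equiv.sum_comp (Equiv.mulRight c)
    (fun σ : Equiv.Perm (Fin (m+1)) =>
        ((((List.finRange (m+1)).take (ℓ+1)).map (fun s => lieDer L (ξ (σ s)))).foldr
            (fun E x => E x) φ) ⊗ₜ[ℂ]
          ∏ s ∈ Finset.univ.filter (fun s : Fin (m+1) => ℓ + 1 ≤ (s:ℕ)),
            linPoly (ξ (σ s)))]
  refine Finset.sum_congr rfl fun σ _ => ?_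
  simp only [Equiv.coe_mulRight, Equiv.Perm.coe_mul, Function.comp_apply]
  congr 1
  · have hmap : ((List.finRange (m+1)).take (ℓ+1)).map (fun s => lieDer L (ξ (σ (c s))))
        = lieDer L (ξ (σ t)) ::
          ((List.finRange (m+1)).take ℓ).map (fun s => lieDer L (ξ (σ s))) := by
      have hl := listmap_c ℓ hℓ t ht'
      calc ((List.finRange (m+1)).take (ℓ+1)).map (fun s => lieDer L (ξ (σ (c s))))
          = (((List.finRange (m+1)).take (ℓ+1)).map c).map
              (fun s => lieDer L (ξ (σ s))) := by
            rw [List.map_map]; rfl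
        _ = _ := by rw [hl]; rfl
    rw [hmap, List.foldr_cons]
  · refine (Finset.prod_bij' (fun s _ => c s) (fun u _ => c⁻¹ u) ?_ ?_ ?_ ?_ ?_).symm
    · intro s hs
      simp only [Finset.mem_filter, Finset.mem_univ, true_and] at hs
      obtain ⟨h1, h2⟩ := c_mem_erase ℓ hℓ t ht' s hs
      simp only [Finset.mem_erase, Finset.mem_filter, Finset.mem_univ, true_and]
      exact ⟨h1, h2⟩
    · intro u hu
      simp only [Finset.mem_erase, Finset.mem_filter, Finset.mem_univ, true_and] at hu
      simp only [Finset.mem_filter, Finset.mem_univ, true_and]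
      exact c_inv_mem ℓ hℓ t ht' u hu.2 hu.1
    · intro s _; simp
    · intro u _; simp
    · intro s _; rfl

theorem delta_pow_formula {A : Type*} [AddCommGroup A] [Module ℂ A] {n : ℕ}
    (L : Fin n → Module.End ℂ A) (φ : A) (k : ℕ) (ξ : Fin k → (Fin n → ℂ)) :
    (∀ ℓ : ℕ, ℓ ≤ k →
      (Delta L ^ ℓ) (φ ⊗ₜ[ℂ] ∏ j, linPoly (ξ j)) =
        (((k - ℓ).factorial : ℂ))⁻¹ •
          ∑ σ : Equiv.Perm (Fin k),
            ((((List.finRange k).take ℓ).map (fun t => lieDer L (ξ (σ t)))).foldr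
                (fun E x => E x) φ) ⊗ₜ[ℂ]
              ∏ t ∈ Finset.univ.filter (fun t : Fin k => ℓ ≤ (t : ℕ)),
                linPoly (ξ (σ t))) ∧
    (∀ ℓ : ℕ, k < ℓ → (Delta L ^ ℓ) (φ ⊗ₜ[ℂ] ∏ j, linPoly (ξ j)) = 0) := by
  have part1 : ∀ ℓ : ℕ, ℓ ≤ k →
      (Delta L ^ ℓ) (φ ⊗ₜ[ℂ] ∏ j, linPoly (ξ j)) =
        (((k - ℓ).factorial : ℂ))⁻¹ •
          ∑ σ : Equiv.Perm (Fin k),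
            ((((List.finRange k).take ℓ).map (fun t => lieDer L (ξ (σ t)))).foldr
                (fun E x => E x) φ) ⊗ₜ[ℂ]
              ∏ t ∈ Finset.univ.filter (fun t : Fin k => ℓ ≤ (t : ℕ)),
                linPoly (ξ (σ t)) := by
    intro ℓ
    induction ℓ with
    | zero =>
      intro _
      have hfil : Finset.univ.filter (fun t : Fin k => 0 ≤ (t : ℕ)) = Finset.univ :=
        Finset.filter_true_of_mem (fun _ _ => Nat.zero_le _)
      simp only [pow_zero, Module.End.one_apply, Nat.sub_zero, List.take_zero, List.map_nil,
        List.foldr_nil, hfil]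
      have hconst : ∀ σ : Equiv.Perm (Fin k),
          φ ⊗ₜ[ℂ] ∏ t, linPoly (ξ (σ t)) = φ ⊗ₜ[ℂ] ∏ j, linPoly (ξ j) := by
        intro σ
        rw [Equiv.prod_comp σ (fun j => linPoly (ξ j))]
      rw [Finset.sum_congr rfl (fun σ _ => hconst σ), Finset.sum_const, Finset.card_univ,
        Fintype.card_perm, Fintype.card_fin, ← Nat.cast_smul_eq_nsmul ℂ, smul_smul,
        inv_mul_cancel₀ (Nat.cast_ne_zero.mpr (Nat.factorial_ne_zero k)), one_smul]
    | succ ℓ IH =>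
      intro hk
      obtain ⟨m, rfl⟩ : ∃ m, k = m + 1 := ⟨k - 1, by omega⟩
      rw [pow_succ', Module.End.mul_apply, IH (by omega), map_smul, map_sum]
      rw [Finset.sum_congr rfl (fun σ _ => delta_step L _
        (Finset.univ.filter (fun t : Fin (m+1) => ℓ ≤ (t : ℕ))) (fun s => ξ (σ s)))]
      rw [sum_shift L φ ξ ℓ (by omega)]
      have h1 : m + 1 - (ℓ + 1) = m - ℓ := by omega
      have h2 : m + 1 - ℓ = (m - ℓ) + 1 := by omega
      rw [h1, h2, ← Nat.cast_smul_eq_nsmul ℂ, smul_smul, Nat.factorial_succ]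
      congr 1
      have ha : ((m - ℓ + 1 : ℕ) : ℂ) ≠ 0 := Nat.cast_ne_zero.mpr (Nat.succ_ne_zero _)
      have hb : (((m - ℓ).factorial : ℕ) : ℂ) ≠ 0 :=
        Nat.cast_ne_zero.mpr (Nat.factorial_ne_zero _)
      push_cast
      field_simp
  refine ⟨part1, ?_⟩
  have hz : Delta L ((Delta L ^ k) (φ ⊗ₜ[ℂ] ∏ j, linPoly (ξ j))) = 0 := by
    rw [part1 k le_rfl, map_smul, map_sum]
    have hfil : Finset.univ.filter (fun t : Fin k => k ≤ (t : ℕ)) = ∅ := by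
      refine Finset.filter_false_of_mem (fun t _ => ?_)
      omega
    rw [Finset.sum_congr rfl (fun σ _ => ?_)]
    · rw [Finset.sum_const_zero, smul_zero]
    · rw [hfil, Finset.prod_empty, delta_tmul_one]
  intro ℓ hℓ
  obtain ⟨p, rfl⟩ : ∃ p, ℓ = p + (k + 1) := ⟨ℓ - (k + 1), by omega⟩
  rw [pow_add, Module.End.mul_apply, pow_succ', Module.End.mul_apply, hz, map_zero]
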